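/- arXiv:1804.07826 — 2 statements merged into one kernel-verified Lean document; each statement's English description precedes it below -/
import Mathlib

section
/- Let Φ ⊂ ℂ be a finite set with at least two elements, let M be an even positive integer (in the paper, a power of 2), let Θ be a random variable uniformly distributed on {2πl/M : l = 0, 1, …, M−1}, and let N be a circularly symmetric complex Gaussian random variable with variance σ² > 0. Then there is NO family of probability measures (F(·|s))_{s∈Φ} on ℂ with the following property: for all s, s′ ∈ Φ, if X ~ F(·|s), X′ ~ F(·|s′), Θ, and N are mutually independent, then the law of s + X′·e^{iΘ} + N equals the law of s′ + X·e^{iΘ} + N. In particular, the arbitrarily varying channel R = S + e^{iΘ}J + N corresponding to SP-OFDM is not l-symmetrizable. -/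
open MeasureTheory ProbabilityTheory
open scoped NNReal ENNReal

/-- The law of a circularly symmetric complex Gaussian random variable with variance `v`. -/
noncomputable def gaussComplexLaw (v : ℝ≥0) : Measure ℂ :=
  ((gaussianReal 0 (v / 2)).prod (gaussianReal 0 (v / 2))).map
    (fun p : ℝ × ℝ => (p.1 : ℂ) + p.2 * Complex.I)

/-- The uniform distribution on the phase set `{2πl/M : l = 0, 1, …, M−1}`. -/
noncomputable def phaseLaw (M : ℕ) : Measure ℝ :=
  (M : ℝ≥0∞)⁻¹ • ∑ l ∈ Finset.range M, Measure.dirac (2 * Real.pi * l / M)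

/- ### Auxiliary development -/

/-- The test character `z ↦ exp(i ⟨w, z⟩)`. -/
noncomputable def chf (w z : ℂ) : ℂ :=
  Complex.exp (Complex.I * ((w.re * z.re + w.im * z.im : ℝ) : ℂ))

lemma chf_add (w a b : ℂ) : chf w (a + b) = chf w a * chf w b := by
  rw [chf, chf, chf, ← Complex.exp_add]
  congr 1
  simp only [Complex.add_re, Complex.add_im]
  push_cast
  ring

lemma norm_chf (w z : ℂ) : ‖chf w z‖ = 1 := by
  rw [chf, Complex.norm_exp]
  simp

lemma chf_ne_zero (w z : ℂ) : chf w z ≠ 0 := Complex.exp_ne_zero _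

lemma chf_zero_left (z : ℂ) : chf 0 z = 1 := by simp [chf]

lemma chf_neg (w z : ℂ) : chf w (-z) = (starRingEnd ℂ) (chf w z) := by
  rw [chf, chf, ← Complex.exp_conj]
  congr 1
  simp only [map_mul, Complex.conj_I, Complex.conj_ofReal, Complex.neg_re, Complex.neg_im]
  push_cast
  ring

set_option maxHeartbeats 1000000 in
lemma continuous_chf : Continuous fun p : ℂ × ℂ => chf p.1 p.2 := by
  simp only [chf]
  fun_prop

set_option maxHeartbeats 1000000 in
lemma continuous_chf' (w : ℂ) : Continuous fun z : ℂ => chf w z := by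
  simp only [chf]
  fun_prop

set_option maxHeartbeats 1000000 in
lemma chf_comp_continuous {α : Type*} [TopologicalSpace α] {f g : α → ℂ}
    (hf : Continuous f) (hg : Continuous g) : Continuous fun a => chf (f a) (g a) := by
  simp only [chf]
  fun_prop

lemma isProbabilityMeasure_phaseLaw {M : ℕ} (hM : M ≠ 0) :
    IsProbabilityMeasure (phaseLaw M) := by
  constructor
  rw [phaseLaw, Measure.smul_apply, Measure.coe_finset_sum]
  simp only [Finset.sum_apply, measure_univ, Finset.sum_const, Finset.card_range, nsmul_eq_mul,
    mul_one, smul_eq_mul]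
  exact ENNReal.inv_mul_cancel (by exact_mod_cast hM) (ENNReal.natCast_ne_top M)

lemma isProbabilityMeasure_gaussComplexLaw (v : ℝ≥0) :
    IsProbabilityMeasure (gaussComplexLaw v) := by
  rw [gaussComplexLaw]
  have h : Measurable fun p : ℝ × ℝ => (p.1 : ℂ) + p.2 * Complex.I := by fun_prop
  exact Measure.isProbabilityMeasure_map h.aemeasurable

lemma integral_phaseLaw {M : ℕ} (hM : M ≠ 0) (f : ℝ → ℂ) (hf : Continuous f) :
    ∫ θ, f θ ∂(phaseLaw M)
      = (((M : ℝ)⁻¹ : ℝ) : ℂ) * ∑ l ∈ Finset.range M, f (2 * Real.pi * l / M) := by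
  have hint : ∀ l ∈ Finset.range M, Integrable f (Measure.dirac (2 * Real.pi * l / M)) := by
    intro l _
    refine ⟨hf.aestronglyMeasurable, ?_⟩
    simp only [HasFiniteIntegral, lintegral_dirac]
    exact ENNReal.coe_lt_top
  rw [phaseLaw, integral_smul_measure, integral_finset_sum_measure hint]
  simp only [integral_dirac]
  simp [ENNReal.toReal_inv, Complex.real_smul]

lemma gauss_char_ne_zero {v' : ℝ≥0} (hv : v' ≠ 0) (t : ℝ) :
    (∫ x : ℝ, Complex.exp (Complex.I * ((t * x : ℝ) : ℂ)) ∂(gaussianReal 0 v')) ≠ 0 := by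
  have hv' : (0 : ℝ) < (v' : ℝ) := lt_of_le_of_ne (v' : ℝ≥0).coe_nonneg (by exact_mod_cast hv.symm)
  rw [gaussianReal_of_var_ne_zero _ hv]
  have hpdf : gaussianPDF 0 v'
      = fun x => ((Real.toNNReal (gaussianPDFReal 0 v' x) : ℝ≥0) : ℝ≥0∞) := rfl
  rw [hpdf, integral_withDensity_eq_integral_smul
    ((measurable_gaussianPDFReal 0 v').real_toNNReal) _]
  have hb : ((-(2 * (v' : ℝ))⁻¹ : ℝ) : ℂ).re < 0 := by
    simp only [Complex.ofReal_re]
    have h2 : (0:ℝ) < (2*(v':ℝ))⁻¹ := inv_pos.mpr (by linarith)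
    linarith
  have heq : ∀ x : ℝ,
      (Real.toNNReal (gaussianPDFReal 0 v' x)) • Complex.exp (Complex.I * ((t * x : ℝ) : ℂ))
      = (((Real.sqrt (2 * Real.pi * v'))⁻¹ : ℝ) : ℂ) *
        Complex.exp (((-(2 * (v' : ℝ))⁻¹ : ℝ) : ℂ) * (x : ℂ) ^ 2 + (Complex.I * t) * x + 0) := by
    intro x
    rw [NNReal.smul_def, Real.coe_toNNReal _ (gaussianPDFReal_nonneg 0 v' x), gaussianPDFReal,
      Complex.real_smul]
    push_cast
    rw [mul_assoc, ← Complex.exp_add]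
    congr 1
    ring
  simp_rw [heq]
  rw [integral_const_mul, integral_cexp_quadratic hb (Complex.I * t) 0]
  have hsq : Real.sqrt (2 * Real.pi * v') ≠ 0 :=
    Real.sqrt_ne_zero'.mpr (mul_pos (by positivity) hv')
  refine mul_ne_zero ?_ (mul_ne_zero ?_ (Complex.exp_ne_zero _))
  · simp only [ne_eq, Complex.ofReal_eq_zero, inv_eq_zero]
    exact hsq
  · rw [Ne, Complex.cpow_eq_zero_iff, not_and_or]
    left
    refine div_ne_zero ?_ ?_
    · exact_mod_cast Real.pi_ne_zero
    · simp only [ne_eq, neg_eq_zero, Complex.ofReal_eq_zero]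
      have h2 : (0:ℝ) < (2*(v':ℝ))⁻¹ := inv_pos.mpr (by linarith)
      intro hcon
      rw [hcon] at h2
      simp at h2


lemma gaussComplex_char_ne_zero {v : ℝ≥0} (hv : v ≠ 0) (w : ℂ) :
    (∫ n, chf w n ∂(gaussComplexLaw v)) ≠ 0 := by
  have hv2 : v / 2 ≠ 0 := by
    simp only [ne_eq, div_eq_zero_iff, OfNat.ofNat_ne_zero, or_false]
    exact hv
  have hmeas : Measurable fun p : ℝ × ℝ => (p.1 : ℂ) + p.2 * Complex.I := by fun_prop
  rw [gaussComplexLaw, integral_map hmeas.aemeasurable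
    ((continuous_chf' w).aestronglyMeasurable)]
  have heq : ∀ p : ℝ × ℝ, chf w ((p.1 : ℂ) + p.2 * Complex.I)
      = Complex.exp (Complex.I * ((w.re * p.1 : ℝ) : ℂ)) *
        Complex.exp (Complex.I * ((w.im * p.2 : ℝ) : ℂ)) := by
    intro p
    rw [chf, ← Complex.exp_add]
    congr 1
    simp only [Complex.add_re, Complex.add_im, Complex.ofReal_re, Complex.ofReal_im,
      Complex.mul_re, Complex.mul_im, Complex.I_re, Complex.I_im]
    push_cast
    ring
  simp_rw [heq]
  rw [integral_prod_mul (fun x : ℝ => Complex.exp (Complex.I * ((w.re * x : ℝ) : ℂ)))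
    (fun y : ℝ => Complex.exp (Complex.I * ((w.im * y : ℝ) : ℂ)))]
  exact mul_ne_zero (gauss_char_ne_zero hv2 _) (gauss_char_ne_zero hv2 _)

set_option maxHeartbeats 1000000 in
lemma integral_chf_map {μ : Measure ℂ} {P : Measure ℝ} {G : Measure ℂ}
    [IsProbabilityMeasure μ] [IsProbabilityMeasure P] [IsProbabilityMeasure G] (w s : ℂ) :
    ∫ z, chf w z
        ∂(Measure.map (fun q : ℂ × ℝ × ℂ => s + q.1 * Complex.exp (Complex.I * q.2.1) + q.2.2)
          (μ.prod (P.prod G))) =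
    chf w s * ((∫ x, (∫ θ, chf w (x * Complex.exp (Complex.I * θ)) ∂P) ∂μ) *
      (∫ n, chf w n ∂G)) := by
  have hg : Measurable fun q : ℂ × ℝ × ℂ =>
      s + q.1 * Complex.exp (Complex.I * q.2.1) + q.2.2 := by fun_prop
  rw [integral_map hg.aemeasurable
    ((continuous_chf' w).aestronglyMeasurable)]
  simp only [chf_add, mul_assoc]
  rw [integral_const_mul]
  congr 1
  have hc1 : Continuous fun q : ℂ × ℝ × ℂ => chf w (q.1 * Complex.exp (Complex.I * q.2.1)) :=
    chf_comp_continuous continuous_const (by fun_prop)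
  have hc2 : Continuous fun q : ℂ × ℝ × ℂ => chf w q.2.2 :=
    chf_comp_continuous continuous_const (by fun_prop)
  have hint : Integrable
      (fun q : ℂ × ℝ × ℂ => chf w (q.1 * Complex.exp (Complex.I * q.2.1)) * chf w q.2.2)
      (μ.prod (P.prod G)) := by
    refine Integrable.mono' (integrable_const 1) (hc1.mul hc2).aestronglyMeasurable
      (ae_of_all _ fun q => ?_)
    rw [norm_mul, norm_chf, norm_chf]
    norm_num
  rw [integral_prod _ hint]
  have heq : ∀ x : ℂ,
      (∫ p : ℝ × ℂ, chf w (x * Complex.exp (Complex.I * p.1)) * chf w p.2 ∂(P.prod G))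
      = (∫ θ, chf w (x * Complex.exp (Complex.I * θ)) ∂P) * (∫ n, chf w n ∂G) := fun x =>
    integral_prod_mul (fun θ : ℝ => chf w (x * Complex.exp (Complex.I * θ)))
      (fun n : ℂ => chf w n)
  simp_rw [heq]
  rw [integral_mul_const]

lemma im_sum_phase_eq_zero {M m : ℕ} (hMm : M = m + m) (hm : m ≠ 0) (w x : ℂ) :
    (∑ l ∈ Finset.range M,
      chf w (x * Complex.exp (Complex.I * ((2 * Real.pi * l / M : ℝ) : ℂ)))).im = 0 := by
  subst hMm
  rw [Finset.sum_range_add]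
  have hmm : ((m : ℝ) + m) ≠ 0 := by
    have : (0:ℝ) < m := by exact_mod_cast Nat.pos_of_ne_zero hm
    linarith
  have hterm : ∀ l : ℕ,
      chf w (x * Complex.exp (Complex.I * ((2 * Real.pi * ↑(m + l) / ↑(m + m) : ℝ) : ℂ)))
      = (starRingEnd ℂ)
        (chf w (x * Complex.exp (Complex.I * ((2 * Real.pi * l / ↑(m + m) : ℝ) : ℂ)))) := by
    intro l
    have hθ : (2 * Real.pi * ↑(m + l) / ↑(m + m) : ℝ)
        = 2 * Real.pi * l / ↑(m + m) + Real.pi := by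
      push_cast
      field_simp
      ring
    rw [hθ, ← chf_neg]
    congr 1
    push_cast
    rw [mul_add, Complex.exp_add, mul_comm Complex.I (Real.pi : ℂ), Complex.exp_pi_mul_I]
    ring
  simp only [hterm]
  rw [Complex.add_im, Complex.im_sum, Complex.im_sum]
  simp only [Complex.conj_im]
  rw [← Finset.sum_add_distrib]
  simp

/-- The SP-OFDM arbitrarily varying channel `R = S + e^{iΘ}J + N` is not l-symmetrizable:
there is no family of probability measures `F (·|s)` on `ℂ` such that for all `s, s' ∈ Φ`,
the law of `s + X'·e^{iΘ} + N` (with `X' ~ F(·|s')`, `Θ` uniform on the `M`-PSK phases and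
`N` circularly symmetric complex Gaussian, all mutually independent) equals the law of
`s' + X·e^{iΘ} + N` (with `X ~ F(·|s)`). -/
theorem SP_OFDM_not_l_symmetrizable (Φ : Finset ℂ) (hΦ : 2 ≤ Φ.card)
    (M : ℕ) (hM : 0 < M) (hMeven : Even M) (v : ℝ≥0) (hv : 0 < v) :
    ¬ ∃ F : ℂ → Measure ℂ,
      (∀ s ∈ Φ, IsProbabilityMeasure (F s)) ∧
      (∀ s ∈ Φ, ∀ s' ∈ Φ,
        Measure.map (fun q : ℂ × ℝ × ℂ => s + q.1 * Complex.exp (Complex.I * q.2.1) + q.2.2)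
          ((F s').prod ((phaseLaw M).prod (gaussComplexLaw v))) =
        Measure.map (fun q : ℂ × ℝ × ℂ => s' + q.1 * Complex.exp (Complex.I * q.2.1) + q.2.2)
          ((F s).prod ((phaseLaw M).prod (gaussComplexLaw v)))) := by
  rintro ⟨F, hFprob, hF⟩
  obtain ⟨s₁, hs₁, s₂, hs₂, hne⟩ := Finset.one_lt_card.mp (by omega : 1 < Φ.card)
  obtain ⟨m, hm⟩ := hMeven
  have hm0 : m ≠ 0 := by omega
  have hM0 : M ≠ 0 := hM.ne'
  have hMR : (M : ℝ) ≠ 0 := by exact_mod_cast hM0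
  haveI hP : IsProbabilityMeasure (phaseLaw M) := isProbabilityMeasure_phaseLaw hM0
  haveI hG : IsProbabilityMeasure (gaussComplexLaw v) := isProbabilityMeasure_gaussComplexLaw v
  haveI h1 : IsProbabilityMeasure (F s₁) := hFprob s₁ hs₁
  haveI h2 : IsProbabilityMeasure (F s₂) := hFprob s₂ hs₂
  set d : ℂ := s₁ - s₂ with hd_def
  have hd : d ≠ 0 := sub_ne_zero.mpr hne
  set c₀ : ℝ := Complex.normSq d with hc₀_def
  have hc₀ : 0 < c₀ := Complex.normSq_pos.mpr hd
  set hsum : ℂ → ℂ → ℂ := fun w x => (((M:ℝ)⁻¹ : ℝ) : ℂ) *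
      ∑ l ∈ Finset.range M, chf w (x * Complex.exp (Complex.I * ((2 * Real.pi * l / M : ℝ) : ℂ)))
    with hsum_def
  have hphase : ∀ (w x : ℂ),
      (∫ θ, chf w (x * Complex.exp (Complex.I * θ)) ∂(phaseLaw M)) = hsum w x := fun w x =>
    integral_phaseLaw hM0 _ (chf_comp_continuous continuous_const (by fun_prop))
  -- imaginary part of the phase-averaged characteristic function vanishes
  have him : ∀ s ∈ Φ, ∀ w : ℂ, (∫ x, hsum w x ∂(F s)).im = 0 := by
    intro s hs w
    haveI := hFprob s hs
    have hconj : ∀ x : ℂ, (starRingEnd ℂ) (hsum w x) = hsum w x := by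
      intro x
      rw [hsum_def]
      simp only [map_mul, Complex.conj_ofReal]
      congr 1
      exact Complex.conj_eq_iff_im.mpr (im_sum_phase_eq_zero hm hm0 w x)
    have hc : (starRingEnd ℂ) (∫ x, hsum w x ∂(F s)) = ∫ x, hsum w x ∂(F s) := by
      rw [← integral_conj]
      simp only [hconj]
    exact Complex.conj_eq_iff_im.mp hc
  -- the key equation
  have key : ∀ t : ℝ, Real.sin (t * c₀) * (∫ x, hsum ((t:ℂ)*d) x ∂(F s₂)).re = 0 := by
    intro t
    set w : ℂ := (t:ℂ) * d with hw
    have h := hF s₁ hs₁ s₂ hs₂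
    have h2 := congrArg (fun ν => ∫ z, chf w z ∂ν) h
    rw [integral_chf_map w s₁, integral_chf_map w s₂] at h2
    simp only [hphase] at h2
    rw [← mul_assoc, ← mul_assoc] at h2
    have h3 := mul_right_cancel₀ (gaussComplex_char_ne_zero hv.ne' w) h2
    have hc : chf w s₁ = chf w s₂ * chf w d := by
      rw [← chf_add, show s₂ + d = s₁ from by rw [hd_def]; ring]
    rw [hc, mul_assoc] at h3
    have h4 := mul_left_cancel₀ (chf_ne_zero w s₂) h3
    have harg : (w.re * d.re + w.im * d.im : ℝ) = t * c₀ := by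
      rw [hc₀_def]
      simp only [hw, Complex.mul_re, Complex.mul_im, Complex.ofReal_re, Complex.ofReal_im,
        Complex.normSq_apply]
      ring
    rw [chf, harg] at h4
    have h5 := congrArg Complex.im h4
    rw [Complex.mul_im, him s₂ hs₂ w, him s₁ hs₁ w, mul_comm Complex.I,
      Complex.exp_ofReal_mul_I_im, Complex.exp_ofReal_mul_I_re] at h5
    simpa using h5
  -- continuity at 0
  have hbound : ∀ (w x : ℂ), ‖hsum w x‖ ≤ 1 := by
    intro w x
    rw [hsum_def]
    simp only
    rw [norm_mul]
    have hn1 : ‖(((M:ℝ)⁻¹ : ℝ) : ℂ)‖ = (M:ℝ)⁻¹ := by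
      rw [Complex.norm_real, Real.norm_eq_abs]
      exact abs_of_nonneg (by positivity)
    have hn2 : ‖∑ l ∈ Finset.range M,
        chf w (x * Complex.exp (Complex.I * ((2 * Real.pi * l / M : ℝ) : ℂ)))‖ ≤ (M:ℝ) := by
      refine (norm_sum_le _ _).trans (le_of_eq ?_)
      rw [Finset.sum_congr rfl fun l _ => norm_chf w _]
      simp
    rw [hn1]
    calc (M:ℝ)⁻¹ * ‖∑ l ∈ Finset.range M,
          chf w (x * Complex.exp (Complex.I * ((2 * Real.pi * l / M : ℝ) : ℂ)))‖
        ≤ (M:ℝ)⁻¹ * M := by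
          exact mul_le_mul_of_nonneg_left hn2 (by positivity)
      _ = 1 := by field_simp
  have hT : Filter.Tendsto (fun t : ℝ => ∫ x, hsum ((t:ℂ)*d) x ∂(F s₂)) (nhds 0) (nhds 1) := by
    have h1int : (∫ _x : ℂ, (1:ℂ) ∂(F s₂)) = 1 := by simp
    rw [← h1int]
    refine tendsto_integral_filter_of_dominated_convergence (fun _ => (1:ℝ)) ?_ ?_
      (integrable_const 1) ?_
    · refine Filter.Eventually.of_forall fun t => Continuous.aestronglyMeasurable ?_
      rw [hsum_def]
      exact continuous_const.mul (continuous_finset_sum _ fun l _ =>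
        chf_comp_continuous continuous_const (by fun_prop))
    · exact Filter.Eventually.of_forall fun t => ae_of_all _ fun x => hbound _ x
    · refine ae_of_all _ fun x => ?_
      have hcont : Continuous fun t : ℝ => hsum ((t:ℂ)*d) x := by
        rw [hsum_def]
        exact continuous_const.mul (continuous_finset_sum _ fun l _ =>
          chf_comp_continuous (by fun_prop) continuous_const)
      have h0 : hsum (((0:ℝ):ℂ)*d) x = 1 := by
        rw [hsum_def]
        simp only [Complex.ofReal_zero, zero_mul, chf_zero_left, Finset.sum_const,
          Finset.card_range, nsmul_eq_mul, mul_one]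
        rw [← Complex.ofReal_natCast, ← Complex.ofReal_mul, inv_mul_cancel₀ hMR]
        simp
      have := hcont.tendsto 0
      rw [h0] at this
      exact this
  have hre : Filter.Tendsto (fun t : ℝ => (∫ x, hsum ((t:ℂ)*d) x ∂(F s₂)).re) (nhds 0)
      (nhds 1) := by
    have h := (Complex.continuous_re.tendsto (1:ℂ)).comp hT
    simpa [Function.comp_def] using h
  have hev : ∀ᶠ t : ℝ in nhds (0:ℝ), (1/2 : ℝ) < (∫ x, hsum ((t:ℂ)*d) x ∂(F s₂)).re :=
    hre.eventually (eventually_gt_nhds (by norm_num))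
  obtain ⟨ε, hε, hball⟩ := Metric.eventually_nhds_iff.mp hev
  set t₀ : ℝ := min (ε/2) (Real.pi/(2*c₀)) with ht₀def
  have hπ := Real.pi_pos
  have ht₀pos : 0 < t₀ := lt_min (by linarith) (by positivity)
  have ht₀ε : dist t₀ 0 < ε := by
    rw [Real.dist_eq, sub_zero, abs_of_pos ht₀pos]
    calc t₀ ≤ ε/2 := min_le_left _ _
      _ < ε := by linarith
  have hre2 := hball ht₀ε
  have hsin : 0 < Real.sin (t₀ * c₀) := by
    apply Real.sin_pos_of_pos_of_lt_pi
    · positivity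
    · have hle : t₀ ≤ Real.pi/(2*c₀) := min_le_right _ _
      have h2 : t₀ * c₀ ≤ Real.pi/2 := by
        calc t₀ * c₀ ≤ (Real.pi/(2*c₀)) * c₀ := by
              exact mul_le_mul_of_nonneg_right hle hc₀.le
          _ = Real.pi/2 := by field_simp
      linarith
  exact absurd (key t₀) (ne_of_gt (mul_pos hsin (by linarith)))
end

section
/- Let U and V be ℂ-valued random variables whose characteristic functions φ_U(ω₁,ω₂) = E[exp(i(ω₁ Re U + ω₂ Im U))] and φ_V(ω₁,ω₂) = E[exp(i(ω₁ Re V + ω₂ Im V))] are real-valued at every point (ω₁,ω₂) ∈ ℝ². If there exists c ∈ ℂ such that c + U has the same distribution as V, then c = 0. -/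
open MeasureTheory ProbabilityTheory

/-- The characteristic function of a complex-valued distribution `ν`, evaluated at
`(ω₁, ω₂) ∈ ℝ²`: `φ_ν(ω₁,ω₂) = E[exp(i(ω₁ Re X + ω₂ Im X))]` for `X ~ ν`. -/
noncomputable def charFunC (ν : Measure ℂ) (w : ℝ × ℝ) : ℂ :=
  ∫ z, Complex.exp (Complex.I * ((w.1 * z.re + w.2 * z.im : ℝ) : ℂ)) ∂ν

private lemma charFunC_map_eq {Ω : Type*} [MeasurableSpace Ω] (μ : Measure Ω)
    (X : Ω → ℂ) (hX : AEMeasurable X μ) (w : ℝ × ℝ) :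
    charFunC (μ.map X) w
      = ∫ ω, Complex.exp (Complex.I * ((w.1 * (X ω).re + w.2 * (X ω).im : ℝ) : ℂ)) ∂μ := by
  rw [charFunC, integral_map hX]
  exact (Complex.continuous_exp.comp (by fun_prop)).aestronglyMeasurable

/-- If `U` and `V` are complex-valued random variables whose characteristic functions are
real-valued everywhere, and `c + U` has the same distribution as `V` for some `c ∈ ℂ`,
then `c = 0`. -/
theorem translation_of_real_charFun_is_zero
    {Ω : Type*} [MeasurableSpace Ω] (μ : Measure Ω) [IsProbabilityMeasure μ]
    (U V : Ω → ℂ) (hU : AEMeasurable U μ) (hV : AEMeasurable V μ)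
    (hUreal : ∀ w : ℝ × ℝ, (charFunC (μ.map U) w).im = 0)
    (hVreal : ∀ w : ℝ × ℝ, (charFunC (μ.map V) w).im = 0)
    (c : ℂ) (hlaw : μ.map (fun ω => c + U ω) = μ.map V) :
    c = 0 := by
  by_contra hc
  have hd : 0 < Complex.normSq c := Complex.normSq_pos.mpr hc
  set d : ℝ := Complex.normSq c with hdef
  -- the key identity : φ_V (t c.re, t c.im) = exp(I t d) * φ_U (t c.re, t c.im)
  have key : ∀ t : ℝ, charFunC (μ.map V) (t * c.re, t * c.im)
      = Complex.exp (Complex.I * (t * d : ℝ))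
        * charFunC (μ.map U) (t * c.re, t * c.im) := by
    intro t
    have hcu : AEMeasurable (fun ω => c + U ω) μ := by fun_prop
    rw [← hlaw, charFunC_map_eq μ _ hcu, charFunC_map_eq μ _ hU, ← integral_const_mul]
    congr 1
    ext ω
    rw [← Complex.exp_add]
    congr 1
    have : (t * c.re) * (c + U ω).re + (t * c.im) * (c + U ω).im
        = t * d + ((t * c.re) * (U ω).re + (t * c.im) * (U ω).im) := by
      simp [Complex.add_re, Complex.add_im, hdef, Complex.normSq_apply]; ring
    rw [this]
    push_cast
    ring
  -- hence sin (t d) * (φ_U _).re = 0 for all t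
  have hsin : ∀ t : ℝ, Real.sin (t * d) * (charFunC (μ.map U) (t * c.re, t * c.im)).re = 0 := by
    intro t
    have h := congrArg Complex.im (key t)
    rw [hVreal] at h
    have hexp : Complex.exp (Complex.I * ((t * d : ℝ) : ℂ))
        = (Real.cos (t * d) : ℂ) + (Real.sin (t * d) : ℂ) * Complex.I := by
      rw [mul_comm, Complex.exp_mul_I, Complex.ofReal_cos, Complex.ofReal_sin]
    rw [hexp] at h
    have him := hUreal (t * c.re, t * c.im)
    set z := charFunC (μ.map U) (t * c.re, t * c.im)
    simp only [add_mul, Complex.add_im, Complex.mul_im, Complex.mul_re,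
      Complex.ofReal_re, Complex.ofReal_im, Complex.I_re, Complex.I_im, him] at h
    nlinarith [h]
  -- for t with t*d ∈ (0, π), φ_U vanishes
  have hzero : ∀ t : ℝ, 0 < t * d → t * d < Real.pi →
      charFunC (μ.map U) (t * c.re, t * c.im) = 0 := by
    intro t h1 h2
    have hs : Real.sin (t * d) ≠ 0 := ne_of_gt (Real.sin_pos_of_pos_of_lt_pi h1 h2)
    have hre : (charFunC (μ.map U) (t * c.re, t * c.im)).re = 0 := by
      have := hsin t
      rcases mul_eq_zero.mp this with h | h
      · exact absurd h hs
      · exact h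
    exact Complex.ext hre (hUreal _)
  -- sequence tₙ → 0 with tₙ*d ∈ (0, π)
  set t : ℕ → ℝ := fun n => Real.pi / (d * (n + 2)) with ht
  have htd : ∀ n, t n * d = Real.pi / (n + 2) := by
    intro n
    show Real.pi / (d * (n + 2)) * d = _
    rw [div_mul_eq_mul_div, div_eq_div_iff (mul_pos hd (by positivity)).ne' (by positivity)]
    ring
  have ht0 : ∀ n : ℕ, 0 < t n * d := by
    intro n; rw [htd]; positivity
  have htpi : ∀ n : ℕ, t n * d < Real.pi := by
    intro n; rw [htd]
    have h2 : (1:ℝ) < (n:ℝ) + 2 := by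
      have := Nat.cast_nonneg (α := ℝ) n; linarith
    calc Real.pi / ((n:ℝ) + 2) < Real.pi / 1 := by
          apply div_lt_div_of_pos_left Real.pi_pos (by positivity) h2
      _ = Real.pi := by ring
  have htlim : Filter.Tendsto t Filter.atTop (nhds 0) := by
    have : t = fun n : ℕ => (Real.pi / d) * (1 / ((n:ℝ) + 2)) := by
      funext n; rw [ht]; field_simp
    rw [this]
    have : Filter.Tendsto (fun n : ℕ => 1 / ((n:ℝ) + 2)) Filter.atTop (nhds 0) := by
      apply Filter.Tendsto.div_atTop tendsto_const_nhds
      exact Filter.tendsto_atTop_add_const_right _ 2 tendsto_natCast_atTop_atTop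
    simpa using this.const_mul (Real.pi / d)
  -- dominated convergence : φ_U(w tₙ) → 1
  have hDC : Filter.Tendsto (fun n => charFunC (μ.map U) (t n * c.re, t n * c.im))
      Filter.atTop (nhds 1) := by
    have heq : ∀ n, charFunC (μ.map U) (t n * c.re, t n * c.im)
        = ∫ ω, Complex.exp (Complex.I *
            ((t n * c.re * (U ω).re + t n * c.im * (U ω).im : ℝ) : ℂ)) ∂μ := by
      intro n; exact charFunC_map_eq μ U hU _
    simp only [heq]
    have h1 : (1:ℂ) = ∫ _ : Ω, (1:ℂ) ∂μ := by simp
    rw [h1]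
    apply MeasureTheory.tendsto_integral_of_dominated_convergence (fun _ => (1:ℝ))
    · intro n
      exact AEMeasurable.aestronglyMeasurable (by fun_prop)
    · exact integrable_const 1
    · intro n
      filter_upwards with ω
      rw [Complex.norm_exp]
      simp [Complex.mul_re]
    · filter_upwards with ω
      have : Filter.Tendsto (fun n => (Complex.I *
          ((t n * c.re * (U ω).re + t n * c.im * (U ω).im : ℝ) : ℂ))) Filter.atTop (nhds 0) := by
        have harg : Filter.Tendsto
            (fun n => (t n * c.re * (U ω).re + t n * c.im * (U ω).im : ℝ))
            Filter.atTop (nhds 0) := by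
          have := (htlim.mul_const (c.re * (U ω).re)).add (htlim.mul_const (c.im * (U ω).im))
          simpa [mul_assoc] using this
        have := (Complex.continuous_ofReal.tendsto 0).comp harg
        simpa using this.const_mul Complex.I
      have := (Complex.continuous_exp.tendsto 0).comp this
      simpa [Function.comp_def] using this
  -- but φ_U(w tₙ) = 0 for all n
  have hzeroseq : ∀ n, charFunC (μ.map U) (t n * c.re, t n * c.im) = 0 := fun n =>
    hzero (t n) (ht0 n) (htpi n)
  simp only [hzeroseq] at hDC
  exact zero_ne_one (tendsto_nhds_unique tendsto_const_nhds hDC)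
end
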